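/- Let F be a field with char(F) ∤ n, γ ∈ F^{m×m}⊗F^{n×n}⊗F^{m×m} with tr₂(γ) = 0, α := (1/n)Σ_{i,j=1}^m E_{ij}⊗I_n⊗E_{ji} + γ, and δ(A,B) := tr₁₂(αᵀ(A⊗I_m − I_m⊗B⊗I_m)). Then tr(δ(A,B)) = (1/n)(tr(A) − m·tr(B)) for all A ∈ F^{mn×mn}, B ∈ F^{n×n}, if and only if tr₃(γ) = 0. -/

import Mathlib

open Matrix Kronecker

/-- Partial trace over the first two tensor factors:
`tr12 (A ⊗ B ⊗ C) = tr A * tr B • C`. -/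
def tr12 {F : Type*} [AddCommMonoid F] {α β γ : Type*} [Fintype α] [Fintype β]
    (M : Matrix ((α × β) × γ) ((α × β) × γ) F) : Matrix γ γ F :=
  Matrix.of fun c d => ∑ p : α × β, M (p, c) (p, d)

/-- Partial trace over the first tensor factor: `tr1 (A ⊗ B ⊗ C) = tr A • (B ⊗ C)`. -/
def tr1 {F : Type*} [AddCommMonoid F] {α β γ : Type*} [Fintype α]
    (M : Matrix ((α × β) × γ) ((α × β) × γ) F) : Matrix (β × γ) (β × γ) F :=
  Matrix.of fun p q => ∑ i : α, M ((i, p.1), p.2) ((i, q.1), q.2)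

/-- Partial trace over the middle tensor factor: `tr2 (A ⊗ B ⊗ C) = tr B • (A ⊗ C)`. -/
def tr2 {F : Type*} [AddCommMonoid F] {α β γ : Type*} [Fintype β]
    (M : Matrix ((α × β) × γ) ((α × β) × γ) F) : Matrix (α × γ) (α × γ) F :=
  Matrix.of fun p q => ∑ k : β, M ((p.1, k), p.2) ((q.1, k), q.2)

/-- Partial trace over the third tensor factor: `tr3 (A ⊗ B ⊗ C) = tr C • (A ⊗ B)`. -/
def tr3 {F : Type*} [AddCommMonoid F] {α β γ : Type*} [Fintype γ]
    (M : Matrix ((α × β) × γ) ((α × β) × γ) F) : Matrix (α × β) (α × β) F :=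
  Matrix.of fun p q => ∑ c : γ, M (p, c) (q, c)

/-- Partial trace over the second factor of a twofold Kronecker product:
`ptr (B ⊗ C) = tr C • B`. -/
def ptr {F : Type*} [AddCommMonoid F] {α β : Type*} [Fintype β]
    (M : Matrix (α × β) (α × β) F) : Matrix α α F :=
  Matrix.of fun i j => ∑ k : β, M (i, k) (j, k)

/-- Partial transpose in the third tensor factor: `pT3 (A ⊗ B ⊗ C) = A ⊗ B ⊗ Cᵀ`. -/
def pT3 {F : Type*} {α β γ : Type*}
    (M : Matrix ((α × β) × γ) ((α × β) × γ) F) : Matrix ((α × β) × γ) ((α × β) × γ) F :=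
  Matrix.of fun p q => M (p.1, q.2) (q.1, p.2)

/-- Partial transpose in the first two tensor factors:
`pT12 (A ⊗ B ⊗ C) = Aᵀ ⊗ Bᵀ ⊗ C`. -/
def pT12 {F : Type*} {α β γ : Type*}
    (M : Matrix ((α × β) × γ) ((α × β) × γ) F) : Matrix ((α × β) × γ) ((α × β) × γ) F :=
  Matrix.of fun p q => M (q.1, p.2) (p.1, q.2)

section Helpers
variable {F : Type*} [Field F] {m n : ℕ}

lemma trace_tr12' (M : Matrix ((Fin m × Fin n) × Fin m) ((Fin m × Fin n) × Fin m) F) :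
    Matrix.trace (tr12 M) = Matrix.trace M := by
  simp [tr12, Matrix.trace, Matrix.diag, Fintype.sum_prod_type]
  rw [Finset.sum_comm]
  exact Finset.sum_congr rfl fun _ _ => Finset.sum_comm

lemma trace_key (α : Matrix ((Fin m × Fin n) × Fin m) ((Fin m × Fin n) × Fin m) F)
    (A : Matrix (Fin m × Fin n) (Fin m × Fin n) F) (B : Matrix (Fin n) (Fin n) F) :
    trace (αᵀ * (A ⊗ₖ (1 : Matrix (Fin m) (Fin m) F) -
        ((1 : Matrix (Fin m) (Fin m) F) ⊗ₖ B) ⊗ₖ (1 : Matrix (Fin m) (Fin m) F))) =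
    (∑ q : Fin m × Fin n, ∑ p : Fin m × Fin n, tr3 α p q * A p q)
      - ∑ i : Fin m, ∑ l : Fin n, ∑ k : Fin n, tr3 α (i,k) (i,l) * B k l := by
  simp only [Matrix.trace, Matrix.diag, Matrix.mul_apply, Matrix.transpose_apply,
    Matrix.sub_apply, kroneckerMap_apply, tr3, Matrix.of_apply, mul_sub,
    Finset.sum_sub_distrib]
  congr 1
  · simp only [Fintype.sum_prod_type, Matrix.one_apply, mul_ite, mul_one, mul_zero,
      Finset.sum_ite_eq, Finset.mem_univ, if_true, Finset.sum_ite_eq', tr3, Matrix.of_apply,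
      Finset.sum_mul]
    refine Finset.sum_congr rfl fun x _ => Finset.sum_congr rfl fun y _ => ?_
    rw [Finset.sum_comm]
    exact Finset.sum_congr rfl fun _ _ => Finset.sum_comm
  · simp only [Fintype.sum_prod_type, Matrix.one_apply, mul_ite, mul_one, mul_zero,
      ite_mul, one_mul, zero_mul, Finset.sum_ite_irrel, Finset.sum_const_zero,
      Finset.sum_ite_eq, Finset.mem_univ, if_true, Finset.sum_ite_eq', tr3, Matrix.of_apply,
      Finset.sum_mul]
    refine Finset.sum_congr rfl fun i _ => Finset.sum_congr rfl fun l _ => ?_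
    rw [Finset.sum_comm]

lemma tr3_base :
    tr3 (∑ i : Fin m, ∑ j : Fin m,
      single i j (1 : F) ⊗ₖ (1 : Matrix (Fin n) (Fin n) F) ⊗ₖ
        single j i (1 : F)) = 1 := by
  ext ⟨p1, p2⟩ ⟨q1, q2⟩
  simp only [tr3, Matrix.of_apply, Matrix.sum_apply, kroneckerMap_apply,
    Matrix.single, Matrix.of_apply, Matrix.one_apply, ite_mul, mul_ite, one_mul, mul_one,
    zero_mul, mul_zero, Finset.sum_ite_irrel, Finset.sum_const_zero,
    Finset.sum_ite_eq, Finset.sum_ite_eq', Finset.mem_univ, if_true, Prod.mk.injEq, ite_and]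
  aesop

lemma tr3_alpha (γ α : Matrix ((Fin m × Fin n) × Fin m) ((Fin m × Fin n) × Fin m) F)
    (hα : α = (1 / (n : F)) • (∑ i : Fin m, ∑ j : Fin m,
      single i j (1 : F) ⊗ₖ (1 : Matrix (Fin n) (Fin n) F) ⊗ₖ
        single j i (1 : F)) + γ) :
    tr3 α = (1 / (n : F)) • (1 : Matrix (Fin m × Fin n) (Fin m × Fin n) F) + tr3 γ := by
  have hlin : ∀ (c : F) (M N : Matrix ((Fin m × Fin n) × Fin m) ((Fin m × Fin n) × Fin m) F),
      tr3 (c • M + N) = c • tr3 M + tr3 N := by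
    intro c M N
    ext p q
    simp [tr3, Finset.sum_add_distrib, Finset.mul_sum]
  rw [hα, hlin, tr3_base]

end Helpers

theorem stmt9 {F : Type*} [Field F] {m n : ℕ} (hn : (n : F) ≠ 0)
    (γ : Matrix ((Fin m × Fin n) × Fin m) ((Fin m × Fin n) × Fin m) F)
    (hγ : tr2 γ = 0)
    (α : Matrix ((Fin m × Fin n) × Fin m) ((Fin m × Fin n) × Fin m) F)
    (hα : α = (1 / (n : F)) • (∑ i : Fin m, ∑ j : Fin m,
      single i j (1 : F) ⊗ₖ (1 : Matrix (Fin n) (Fin n) F) ⊗ₖ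
        single j i (1 : F)) + γ) :
    (∀ (A : Matrix (Fin m × Fin n) (Fin m × Fin n) F) (B : Matrix (Fin n) (Fin n) F),
      trace (tr12 (αᵀ * (A ⊗ₖ (1 : Matrix (Fin m) (Fin m) F) -
          ((1 : Matrix (Fin m) (Fin m) F) ⊗ₖ B) ⊗ₖ (1 : Matrix (Fin m) (Fin m) F))))
        = (1 / (n : F)) * (trace A - (m : F) * trace B)) ↔
    tr3 γ = 0 := by
  have hT := tr3_alpha γ α hα
  constructor
  · intro h
    ext p q
    have h1 := h (single p q 1) 0
    rw [trace_tr12', trace_key, hT] at h1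
    simp only [Matrix.single, Matrix.of_apply, Matrix.add_apply, Matrix.smul_apply,
      Matrix.one_apply, smul_eq_mul, mul_ite, mul_one, mul_zero, ite_and,
      Finset.sum_ite_eq, Finset.sum_ite_eq', Finset.mem_univ, if_true,
      Matrix.trace, Matrix.diag, trace_zero, Matrix.zero_apply,
      Finset.sum_const_zero, sub_zero, mul_zero, Fintype.sum_prod_type] at h1
    rcases eq_or_ne p q with rfl | hpq
    · simp_all
    · simp_all [Ne.symm hpq]
  · intro h3 A B
    rw [trace_tr12', trace_key, hT, h3, add_zero]
    simp only [Matrix.smul_apply, Matrix.one_apply, smul_eq_mul, mul_ite, mul_one, mul_zero,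
      ite_mul, zero_mul, ite_and, Prod.mk.injEq, Finset.sum_ite_eq, Finset.sum_ite_eq',
      Finset.mem_univ, if_true, Matrix.trace, Matrix.diag, Fintype.sum_prod_type,
      Finset.sum_const, Finset.card_univ, Fintype.card_fin, nsmul_eq_mul, Finset.mul_sum]
    simp only [mul_sub, Finset.mul_sum]
    congr 1
    exact Finset.sum_congr rfl fun i _ => by ring
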